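/- Let k, k' ∈ A_c(Y) with symbols ℓ = π_c(k) and ℓ' = π_c(k'). Then for every (y, s, y'', s'') the function (y', s') ↦ k(y, s, y', s')·k'(y', s', y'', s'') is integrable on Y × ℝ, the composed kernel k ∘ k' is a continuous function, and k ∘ k' belongs to A_c(Y) with symbol π_c(k ∘ k') = ℓ ⋆ ℓ'; i.e., there exists ν > 0 such that (k ∘ k')(y, s, y'', s'') = (ℓ ⋆ ℓ')(y, y'', s − s'') whenever s ≤ −ν and s'' ≤ −ν, and k ∘ k' has compact support in the complement of that region. In particular A_c(Y) is an algebra and π_c is an algebra homomorphism onto B_c(Y). -/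

import Mathlib

open MeasureTheory

noncomputable section

/-- `ℓ` belongs to `B_c(Y)`: it is continuous and supported in `Y × Y × [-R, R]`
for some `R > 0`. -/
def MemBc {Y : Type*} [TopologicalSpace Y] (ℓ : Y → Y → ℝ → ℂ) : Prop :=
  Continuous (fun q : Y × Y × ℝ => ℓ q.1 q.2.1 q.2.2) ∧
    ∃ R > (0 : ℝ), ∀ y y' t, t ∉ Set.Icc (-R) R → ℓ y y' t = 0

/-- The convolution product on `B_c(Y)`:
`(ℓ ⋆ ℓ')(y, y'', u) = ∫_Y ∫_ℝ ℓ(y, y', t) ℓ'(y', y'', u − t) dt dμ(y')`. -/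
def conv {Y : Type*} [MeasurableSpace Y] (μ : Measure Y)
    (ℓ ℓ' : Y → Y → ℝ → ℂ) : Y → Y → ℝ → ℂ :=
  fun y y'' u => ∫ q : Y × ℝ, ℓ y q.1 q.2 * ℓ' q.1 y'' (u - q.2) ∂(μ.prod volume)

/-- `k` belongs to `A_c(Y)` with symbol `ℓ`: `k` is continuous; there is a `λ > 0`
such that `k(y, s, y', s') = ℓ(y, y', s − s')` whenever `s ≤ −λ` and `s' ≤ −λ`, and
`k` has compact support in the complement of that region. -/
def MemAc {Y : Type*} [TopologicalSpace Y] (k : Y × ℝ → Y × ℝ → ℂ)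
    (ℓ : Y → Y → ℝ → ℂ) : Prop :=
  Continuous (fun q : (Y × ℝ) × (Y × ℝ) => k q.1 q.2) ∧
    ∃ l > (0 : ℝ),
      (∀ y s y' s', s ≤ -l → s' ≤ -l → k (y, s) (y', s') = ℓ y y' (s - s')) ∧
      HasCompactSupport (fun q : (Y × ℝ) × (Y × ℝ) =>
        if q.1.2 ≤ -l ∧ q.2.2 ≤ -l then 0 else k q.1 q.2)

/-- Composition of kernels:
`(k ∘ k')(y, s, y'', s'') = ∫_{Y×ℝ} k(y, s, y', s') k'(y', s', y'', s'') dμ(y') ds'`. -/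
def kcomp {Y : Type*} [MeasurableSpace Y] (μ : Measure Y)
    (k k' : Y × ℝ → Y × ℝ → ℂ) : Y × ℝ → Y × ℝ → ℂ :=
  fun p q => ∫ r : Y × ℝ, k p r * k' r q ∂(μ.prod volume)

/-- Structure lemma: from `k ∈ A_c(Y)` with symbol `ℓ ∈ B_c(Y)` we extract the
corner radius `l`, the symbol support radius `R`, a bound `A` on the compact part,
and a uniform bound `C`, together with the corner identity, symbol support,
uniform bounds, and the support dichotomy for `k`. -/
lemma kernel_struct {Y : Type*} [MetricSpace Y] [CompactSpace Y]
    {k : Y × ℝ → Y × ℝ → ℂ} {ℓ : Y → Y → ℝ → ℂ}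
    (hℓ : MemBc ℓ) (hk : MemAc k ℓ) :
    ∃ (l R A C : ℝ), 0 < l ∧ 0 < R ∧ 0 < A ∧ 0 < C ∧
      (∀ y s y' s', s ≤ -l → s' ≤ -l → k (y, s) (y', s') = ℓ y y' (s - s')) ∧
      (∀ y y' t, t ∉ Set.Icc (-R) R → ℓ y y' t = 0) ∧
      (∀ p q : Y × ℝ, ‖k p q‖ ≤ C) ∧
      (∀ y y' t, ‖ℓ y y' t‖ ≤ C) ∧
      (∀ p q : Y × ℝ, k p q ≠ 0 →
        (|p.2| ≤ A ∧ |q.2| ≤ A) ∨ (p.2 ≤ -l ∧ q.2 ≤ -l ∧ |p.2 - q.2| ≤ R)) := by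
  obtain ⟨hℓc, R, hR, hℓsupp⟩ := hℓ
  obtain ⟨hkc, l, hl, hcor, hKc⟩ := hk
  set g := fun q : (Y × ℝ) × (Y × ℝ) =>
    if q.1.2 ≤ -l ∧ q.2.2 ≤ -l then 0 else k q.1 q.2 with hg
  -- bound on the symbol
  have hKℓ : IsCompact ((Set.univ : Set Y) ×ˢ ((Set.univ : Set Y) ×ˢ Set.Icc (-R) R)) :=
    isCompact_univ.prod (isCompact_univ.prod isCompact_Icc)
  obtain ⟨C₁, hC₁⟩ := hKℓ.exists_bound_of_continuousOn hℓc.continuousOn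
  -- bound on k on the compact part
  obtain ⟨C₂, hC₂⟩ := hKc.exists_bound_of_continuousOn hkc.continuousOn
  -- bound on the time coordinates on the compact part
  have hcontA : Continuous fun q : (Y × ℝ) × (Y × ℝ) => (|q.1.2| ⊔ |q.2.2| : ℝ) :=
    (continuous_fst.snd.abs).max (continuous_snd.snd.abs)
  obtain ⟨A₀, hA₀⟩ := hKc.exists_bound_of_continuousOn hcontA.continuousOn
  set A := max A₀ 1 with hA
  set C := max (max C₁ C₂) 1 with hCdef
  -- off the corner and off the compact set, k vanishes
  have hout : ∀ p q : Y × ℝ, ¬(p.2 ≤ -l ∧ q.2 ≤ -l) →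
      ((p, q) ∉ tsupport g) → k p q = 0 := by
    intro p q hcorner hnot
    have h0 := image_eq_zero_of_notMem_tsupport (f := g) hnot
    simpa [hg, if_neg hcorner] using h0
  have hℓbd : ∀ y y' t, ‖ℓ y y' t‖ ≤ C := by
    intro y y' t
    by_cases ht : t ∈ Set.Icc (-R) R
    · have := hC₁ (y, y', t)
        (Set.mem_prod.mpr ⟨Set.mem_univ _, Set.mem_prod.mpr ⟨Set.mem_univ _, ht⟩⟩)
      exact this.trans ((le_max_left _ _).trans (le_max_left _ _))
    · rw [hℓsupp y y' t ht, norm_zero]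
      exact zero_le_one.trans (le_max_right _ _)
  have hkbd : ∀ p q : Y × ℝ, ‖k p q‖ ≤ C := by
    rintro ⟨y, s⟩ ⟨y', s'⟩
    by_cases hc : s ≤ -l ∧ s' ≤ -l
    · rw [hcor y s y' s' hc.1 hc.2]
      exact hℓbd _ _ _
    · by_cases hP : (((y, s) : Y × ℝ), ((y', s') : Y × ℝ)) ∈ tsupport g
      · exact (hC₂ _ hP).trans ((le_max_right _ _).trans (le_max_left _ _))
      · rw [hout (y, s) (y', s') hc hP, norm_zero]
        exact zero_le_one.trans (le_max_right _ _)
  have hvan : ∀ p q : Y × ℝ, k p q ≠ 0 →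
      (|p.2| ≤ A ∧ |q.2| ≤ A) ∨ (p.2 ≤ -l ∧ q.2 ≤ -l ∧ |p.2 - q.2| ≤ R) := by
    rintro ⟨y, s⟩ ⟨y', s'⟩ hne
    by_cases hc : s ≤ -l ∧ s' ≤ -l
    · right
      refine ⟨hc.1, hc.2, ?_⟩
      by_contra habs
      apply hne
      rw [hcor y s y' s' hc.1 hc.2]
      apply hℓsupp
      intro hmem
      exact habs (abs_le.mpr (Set.mem_Icc.mp hmem))
    · left
      by_cases hP : (((y, s) : Y × ℝ), ((y', s') : Y × ℝ)) ∈ tsupport g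
      · have h1 := hA₀ _ hP
        rw [Real.norm_eq_abs] at h1
        have h2 : (|s| ⊔ |s'| : ℝ) ≤ A₀ := (le_abs_self _).trans h1
        constructor
        · exact le_trans (le_trans (le_max_left _ _) h2) (le_max_left _ _)
        · exact le_trans (le_trans (le_max_right _ _) h2) (le_max_left _ _)
      · exact absurd (hout (y, s) (y', s') hc hP) hne
  exact ⟨l, R, A, C, hl, hR, lt_of_lt_of_le one_pos (le_max_right _ _),
    lt_of_lt_of_le one_pos (le_max_right _ _), hcor, hℓsupp, hkbd, hℓbd, hvan⟩

/-- Continuity of a parameter-dependent integral over `Y × ℝ`, given a uniform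
bound and a locally-uniform support estimate in the `ℝ` variable. -/
lemma continuous_param_integral {X Y : Type*} [TopologicalSpace X]
    [FirstCountableTopology X]
    [MetricSpace Y] [CompactSpace Y] [MeasurableSpace Y] [BorelSpace Y]
    (μ : Measure Y) [IsFiniteMeasure μ] (F : X → Y × ℝ → ℂ)
    (hF : Continuous fun p : X × (Y × ℝ) => F p.1 p.2) {C : ℝ}
    (hC : ∀ x r, ‖F x r‖ ≤ C)
    (hloc : ∀ x₀ : X, ∃ M : ℝ, ∀ᶠ x in nhds x₀, ∀ r : Y × ℝ, ¬ |r.2| ≤ M → F x r = 0) :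
    Continuous fun x => ∫ r, F x r ∂(μ.prod volume) := by
  rw [continuous_iff_continuousAt]
  intro x₀
  obtain ⟨M, hM⟩ := hloc x₀
  apply MeasureTheory.continuousAt_of_dominated
    (bound := Set.indicator ((Set.univ : Set Y) ×ˢ Set.Icc (-M) M) fun _ => C)
  · exact Filter.Eventually.of_forall fun x =>
      (hF.comp (continuous_const.prodMk continuous_id)).aestronglyMeasurable
  · refine hM.mono fun x hx => Filter.Eventually.of_forall fun r => ?_
    by_cases hr : r ∈ ((Set.univ : Set Y) ×ˢ Set.Icc (-M) M)
    · rw [Set.indicator_of_mem hr]; exact hC x r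
    · rw [Set.indicator_of_notMem hr]
      have h0 : F x r = 0 :=
        hx r (fun h => hr ⟨Set.mem_univ _, Set.mem_Icc.mpr (abs_le.mp h)⟩)
      simp [h0]
  · refine IntegrableOn.integrable_indicator ?_ (MeasurableSet.univ.prod measurableSet_Icc)
    refine (integrableOn_const_iff).mpr (Or.inr ?_)
    rw [Measure.prod_prod]
    exact ENNReal.mul_lt_top (measure_lt_top μ _)
      (by rw [Real.volume_Icc]; exact ENNReal.ofReal_lt_top)
  · exact Filter.Eventually.of_forall fun r =>
      (hF.comp (continuous_id.prodMk continuous_const)).continuousAt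

/-- for `k, k' ∈ A_c(Y)` with symbols `ℓ, ℓ'`, the integrand defining
`(k ∘ k')(y, s, y'', s'')` is integrable, the composed kernel is continuous, the
symbol `ℓ ⋆ ℓ'` lies in `B_c(Y)`, and `k ∘ k' ∈ A_c(Y)` with symbol `ℓ ⋆ ℓ'`; hence
`A_c(Y)` is an algebra and the symbol map is an algebra homomorphism onto `B_c(Y)`. -/
theorem Ac_algebra_symbol_homomorphism
    {Y : Type*} [MetricSpace Y] [CompactSpace Y] [MeasurableSpace Y] [BorelSpace Y]
    (μ : Measure Y) [IsFiniteMeasure μ]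
    (k k' : Y × ℝ → Y × ℝ → ℂ) (ℓ ℓ' : Y → Y → ℝ → ℂ)
    (hℓ : MemBc ℓ) (hℓ' : MemBc ℓ')
    (hk : MemAc k ℓ) (hk' : MemAc k' ℓ') :
    (∀ (y : Y) (s : ℝ) (y'' : Y) (s'' : ℝ),
        Integrable (fun r : Y × ℝ => k (y, s) r * k' r (y'', s'')) (μ.prod volume)) ∧
    Continuous (fun q : (Y × ℝ) × (Y × ℝ) => kcomp μ k k' q.1 q.2) ∧
    MemBc (conv μ ℓ ℓ') ∧
    MemAc (kcomp μ k k') (conv μ ℓ ℓ') := by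
  obtain ⟨l, R, A, C, hl, hR, hA, hC, hcor, hℓsupp, hkbd, hℓbd, hvan⟩ := kernel_struct hℓ hk
  obtain ⟨l', R', A', C', hl', hR', hA', hC', hcor', hℓ'supp, hk'bd, hℓ'bd, hvan'⟩ :=
    kernel_struct hℓ' hk'
  have hkc := hk.1
  have hk'c := hk'.1
  have hℓc := hℓ.1
  have hℓ'c := hℓ'.1
  -- support of k (p, ·) in the second time variable
  have hksupp : ∀ (p r : Y × ℝ), ¬ |r.2| ≤ max A (|p.2| + R) → k p r = 0 := by
    intro p r h
    by_contra hne
    rcases hvan p r hne with ⟨_, h2⟩ | ⟨_, _, h2⟩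
    · exact h (h2.trans (le_max_left _ _))
    · have h3 := abs_sub_abs_le_abs_sub r.2 p.2
      rw [abs_sub_comm] at h3
      have h4 : |r.2| ≤ |p.2| + R := by linarith
      exact h (h4.trans (le_max_right _ _))
  -- integrability
  have hint : ∀ p q : Y × ℝ, Integrable (fun r : Y × ℝ => k p r * k' r q) (μ.prod volume) := by
    intro p q
    have hcont : Continuous fun r : Y × ℝ => k p r * k' r q :=
      (hkc.comp (continuous_const.prodMk continuous_id)).mul
        (hk'c.comp (continuous_id.prodMk continuous_const))
    apply hcont.integrable_of_hasCompactSupport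
    apply HasCompactSupport.intro
      (K := (Set.univ : Set Y) ×ˢ Set.Icc (-(max A (|p.2| + R))) (max A (|p.2| + R)))
      (isCompact_univ.prod isCompact_Icc)
    intro r hr
    have h2 : ¬ |r.2| ≤ max A (|p.2| + R) := by
      intro habs
      exact hr ⟨Set.mem_univ _, Set.mem_Icc.mpr (abs_le.mp habs)⟩
    rw [hksupp p r h2, zero_mul]
  -- continuity of the composition
  have hcont : Continuous (fun x : (Y × ℝ) × (Y × ℝ) => kcomp μ k k' x.1 x.2) := by
    show Continuous fun x : (Y × ℝ) × (Y × ℝ) =>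
      ∫ r : Y × ℝ, k x.1 r * k' r x.2 ∂(μ.prod volume)
    apply continuous_param_integral μ
      (fun (x : (Y × ℝ) × (Y × ℝ)) (r : Y × ℝ) => k x.1 r * k' r x.2) (C := C * C')
    · exact (hkc.comp ((continuous_fst.fst).prodMk continuous_snd)).mul
        (hk'c.comp (continuous_snd.prodMk continuous_fst.snd))
    · intro x r
      rw [norm_mul]
      exact mul_le_mul (hkbd _ _) (hk'bd _ _) (norm_nonneg _) hC.le
    · intro x₀
      refine ⟨max A (|x₀.1.2| + 1 + R), ?_⟩
      have hcont2 : Continuous fun x : (Y × ℝ) × (Y × ℝ) => |x.1.2 - x₀.1.2| :=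
        (continuous_fst.snd.sub continuous_const).abs
      have hev : ∀ᶠ x : (Y × ℝ) × (Y × ℝ) in nhds x₀, |x.1.2 - x₀.1.2| < 1 := by
        have h0 : |x₀.1.2 - x₀.1.2| < 1 := by simp
        exact (hcont2.continuousAt (x := x₀)).eventually_lt_const h0
      refine hev.mono fun x hx r hr => ?_
      have h1 : |x.1.2| ≤ |x₀.1.2| + 1 := by
        have := abs_sub_abs_le_abs_sub x.1.2 x₀.1.2
        linarith
      have h2 : ¬ |r.2| ≤ max A (|x.1.2| + R) := by
        intro habs
        exact hr (habs.trans (max_le_max le_rfl (by linarith)))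
      rw [hksupp x.1 r h2, zero_mul]
  -- continuity of the convolution
  have hconvcont : Continuous (fun q : Y × Y × ℝ => conv μ ℓ ℓ' q.1 q.2.1 q.2.2) := by
    show Continuous fun x : Y × Y × ℝ =>
      ∫ r : Y × ℝ, ℓ x.1 r.1 r.2 * ℓ' r.1 x.2.1 (x.2.2 - r.2) ∂(μ.prod volume)
    apply continuous_param_integral μ
      (fun x : Y × Y × ℝ => fun r : Y × ℝ => ℓ x.1 r.1 r.2 * ℓ' r.1 x.2.1 (x.2.2 - r.2))
      (C := C * C')
    · exact (hℓc.comp ((continuous_fst.fst).prodMk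
        ((continuous_snd.fst).prodMk continuous_snd.snd))).mul
        (hℓ'c.comp ((continuous_snd.fst).prodMk
          (((continuous_fst.snd.fst)).prodMk (continuous_fst.snd.snd.sub continuous_snd.snd))))
    · intro x r
      rw [norm_mul]
      exact mul_le_mul (hℓbd _ _ _) (hℓ'bd _ _ _) (norm_nonneg _) hC.le
    · intro x₀
      refine ⟨R, Filter.Eventually.of_forall fun x r hr => ?_⟩
      rw [hℓsupp x.1 r.1 r.2 (fun hmem => hr (abs_le.mpr (Set.mem_Icc.mp hmem))), zero_mul]
  -- support of the convolution
  have hconvsupp : ∀ y y'' u, u ∉ Set.Icc (-(R + R')) (R + R') → conv μ ℓ ℓ' y y'' u = 0 := by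
    intro y y'' u hu
    have hz : ∀ r : Y × ℝ, ℓ y r.1 r.2 * ℓ' r.1 y'' (u - r.2) = 0 := by
      intro r
      by_cases h1 : r.2 ∈ Set.Icc (-R) R
      · by_cases h2 : u - r.2 ∈ Set.Icc (-R') R'
        · exfalso
          apply hu
          rw [Set.mem_Icc] at h1 h2 ⊢
          constructor <;> linarith [h1.1, h1.2, h2.1, h2.2]
        · rw [hℓ'supp _ _ _ h2, mul_zero]
      · rw [hℓsupp _ _ _ h1, zero_mul]
    show (∫ r : Y × ℝ, ℓ y r.1 r.2 * ℓ' r.1 y'' (u - r.2) ∂(μ.prod volume)) = 0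
    rw [show (fun r : Y × ℝ => ℓ y r.1 r.2 * ℓ' r.1 y'' (u - r.2)) = fun _ => (0 : ℂ) from
      funext hz, integral_zero]
  -- substitution
  have hsub : ∀ (y y'' : Y) (s s'' : ℝ),
      (∫ r : Y × ℝ, ℓ y r.1 (s - r.2) * ℓ' r.1 y'' (r.2 - s'') ∂(μ.prod volume)) =
        conv μ ℓ ℓ' y y'' (s - s'') := by
    intro y y'' s s''
    have hmp : MeasurePreserving (fun r : Y × ℝ => (r.1, s - r.2))
        (μ.prod volume) (μ.prod volume) :=
      (MeasurePreserving.id μ).prod (Measure.measurePreserving_sub_left volume s)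
    have hemb : MeasurableEmbedding (fun r : Y × ℝ => (r.1, s - r.2)) :=
      ((MeasurableEquiv.refl Y).prodCongr (MeasurableEquiv.subLeft s)).measurableEmbedding
    have h := hmp.integral_comp hemb
      (fun q : Y × ℝ => ℓ y q.1 q.2 * ℓ' q.1 y'' ((s - s'') - q.2))
    show _ = ∫ q : Y × ℝ, ℓ y q.1 q.2 * ℓ' q.1 y'' ((s - s'') - q.2) ∂(μ.prod volume)
    rw [← h]
    refine integral_congr_ae (Filter.Eventually.of_forall fun r => ?_)
    simp only
    rw [show (s - s'') - (s - r.2) = r.2 - s'' from by ring]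
  -- constants
  set ν := l + l' + R + R' + A + A' with hν_def
  have hν : 0 < ν := by linarith
  set N := ν + R + R' + A + A' + 1 with hN_def
  -- corner identity
  have hcorner : ∀ y s y'' s'', s ≤ -ν → s'' ≤ -ν →
      kcomp μ k k' (y, s) (y'', s'') = conv μ ℓ ℓ' y y'' (s - s'') := by
    intro y s y'' s'' hs hs''
    have hid : ∀ r : Y × ℝ,
        k (y, s) r * k' r (y'', s'') = ℓ y r.1 (s - r.2) * ℓ' r.1 y'' (r.2 - s'') := by
      rintro ⟨y₁, s₁⟩
      by_cases h1 : s₁ ≤ -l ∧ s₁ ≤ -l'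
      · rw [hcor y s y₁ s₁ (by linarith) h1.1, hcor' y₁ s₁ y'' s'' h1.2 (by linarith)]
      · rcases not_and_or.mp h1 with h2 | h2
        · rw [not_le] at h2
          have hk0 : k (y, s) (y₁, s₁) = 0 := by
            by_contra hne
            rcases hvan _ _ hne with ⟨hA1, _⟩ | ⟨_, hcl, _⟩
            · simp only at hA1
              have : ν ≤ |s| := by rw [abs_of_nonpos (by linarith)]; linarith
              linarith
            · simp only at hcl; linarith
          have hl0 : ℓ y y₁ (s - s₁) = 0 := by
            apply hℓsupp
            intro hmem
            rw [Set.mem_Icc] at hmem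
            linarith [hmem.1]
          rw [hk0, hl0, zero_mul, zero_mul]
        · rw [not_le] at h2
          have hk0 : k' (y₁, s₁) (y'', s'') = 0 := by
            by_contra hne
            rcases hvan' _ _ hne with ⟨_, hA1⟩ | ⟨hcl, _, _⟩
            · simp only at hA1
              have : ν ≤ |s''| := by rw [abs_of_nonpos (by linarith)]; linarith
              linarith
            · simp only at hcl; linarith
          have hl0 : ℓ' y₁ y'' (s₁ - s'') = 0 := by
            apply hℓ'supp
            intro hmem
            rw [Set.mem_Icc] at hmem
            linarith [hmem.2]
          rw [hk0, hl0, mul_zero, mul_zero]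
    show (∫ r : Y × ℝ, k (y, s) r * k' r (y'', s'') ∂(μ.prod volume)) = _
    rw [show (fun r : Y × ℝ => k (y, s) r * k' r (y'', s'')) =
      fun r : Y × ℝ => ℓ y r.1 (s - r.2) * ℓ' r.1 y'' (r.2 - s'') from funext hid]
    exact hsub y y'' s s''
  -- compact support of the modified composition
  have hsupp : HasCompactSupport (fun q : (Y × ℝ) × (Y × ℝ) =>
      if q.1.2 ≤ -ν ∧ q.2.2 ≤ -ν then 0 else kcomp μ k k' q.1 q.2) := by
    apply HasCompactSupport.intro
      (K := ((Set.univ : Set Y) ×ˢ Set.Icc (-N) N) ×ˢ ((Set.univ : Set Y) ×ˢ Set.Icc (-N) N))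
      ((isCompact_univ.prod isCompact_Icc).prod (isCompact_univ.prod isCompact_Icc))
    rintro ⟨⟨y, s⟩, ⟨y'', s''⟩⟩ hx
    by_cases hcν : s ≤ -ν ∧ s'' ≤ -ν
    · exact if_pos hcν
    · rw [if_neg hcν]
      have hcν2 : (-ν < s) ∨ (-ν < s'') := by
        rcases not_and_or.mp hcν with h | h
        · exact Or.inl (not_le.mp h)
        · exact Or.inr (not_le.mp h)
      have hxN : N < s ∨ s < -N ∨ N < s'' ∨ s'' < -N := by
        by_contra hcon
        push_neg at hcon
        exact hx ⟨⟨Set.mem_univ _, Set.mem_Icc.mpr ⟨hcon.2.1, hcon.1⟩⟩,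
          ⟨Set.mem_univ _, Set.mem_Icc.mpr ⟨hcon.2.2.2, hcon.2.2.1⟩⟩⟩
      have hzero : ∀ r : Y × ℝ, k (y, s) r * k' r (y'', s'') = 0 := by
        rintro ⟨y₁, s₁⟩
        by_contra hne
        have hkne : k (y, s) (y₁, s₁) ≠ 0 := fun h => hne (by rw [h, zero_mul])
        have hk'ne : k' (y₁, s₁) (y'', s'') ≠ 0 := fun h => hne (by rw [h, mul_zero])
        have hv1 := hvan _ _ hkne
        have hv2 := hvan' _ _ hk'ne
        simp only at hv1 hv2
        rcases hv1 with ⟨ha1, ha2⟩ | ⟨hb1, hb2, hb3⟩ <;>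
          rcases hv2 with ⟨hc1, hc2⟩ | ⟨hd1, hd2, hd3⟩
        · obtain ⟨u1, u2⟩ := abs_le.mp ha1
          obtain ⟨u3, u4⟩ := abs_le.mp ha2
          obtain ⟨u5, u6⟩ := abs_le.mp hc1
          obtain ⟨u7, u8⟩ := abs_le.mp hc2
          rcases hxN with h | h | h | h <;> linarith
        · obtain ⟨u1, u2⟩ := abs_le.mp ha1
          obtain ⟨u3, u4⟩ := abs_le.mp ha2
          obtain ⟨u5, u6⟩ := abs_le.mp hd3
          rcases hxN with h | h | h | h <;> linarith
        · obtain ⟨u1, u2⟩ := abs_le.mp hb3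
          obtain ⟨u3, u4⟩ := abs_le.mp hc1
          obtain ⟨u5, u6⟩ := abs_le.mp hc2
          rcases hxN with h | h | h | h <;> linarith
        · obtain ⟨u1, u2⟩ := abs_le.mp hb3
          obtain ⟨u3, u4⟩ := abs_le.mp hd3
          rcases hxN with h | h | h | h <;> rcases hcν2 with h2 | h2 <;> linarith
      show (∫ r : Y × ℝ, k (y, s) r * k' r (y'', s'') ∂(μ.prod volume)) = 0
      rw [show (fun r : Y × ℝ => k (y, s) r * k' r (y'', s'')) = fun _ => (0 : ℂ) from
        funext hzero, integral_zero]
  refine ⟨fun y s y'' s'' => hint (y, s) (y'', s''), hcont,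
    ⟨hconvcont, R + R', by linarith, hconvsupp⟩,
    hcont, ν, hν, hcorner, hsupp⟩

end
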